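/- Let k be a perfect field of prime characteristic p, let n ≤ d, and let f = ℓ₁^{a₁}⋯ℓ_n^{a_n} ∈ k[x₁,…,x_d] where ℓ₁,…,ℓ_n are linear forms that are linearly independent over k and every aᵢ > 0. Let a = max{a₁,…,a_n} and e = ⌈log_p(a)⌉ + 1. Then the level of f equals e, and I_e(f^{p^e−1}) is the principal ideal generated by ℓ₁^{a₁−1}⋯ℓ_n^{a_n−1}. -/

import Mathlib

set_option linter.unusedSectionVars false
set_option maxHeartbeats 1000000


open MvPolynomial

/-- `J^[q]`: the ideal generated by the `q`-th powers of the elements of `J`. -/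
def bracketPow {R : Type*} [CommRing R] (q : ℕ) (J : Ideal R) : Ideal R :=
  Ideal.span ((fun a => a ^ q) '' (J : Set R))

/-- `I_e(g)` (for the prime `p`): the smallest ideal `J` with `g ∈ J^[p^e]`. -/
def rootIdeal {R : Type*} [CommRing R] (p e : ℕ) (g : R) : Ideal R :=
  sInf {J : Ideal R | g ∈ bracketPow (p ^ e) J}

/-- `f` has level `e`: `e` is the least integer `≥ 1` such that
`f^(p^e - p) ∈ (I_e(f^(p^e - 1)))^[p^e]`. -/
def HasLevel {R : Type*} [CommRing R] (p : ℕ) (f : R) (e : ℕ) : Prop :=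
  IsLeast {e' : ℕ | 1 ≤ e' ∧
    f ^ (p ^ e' - p) ∈ bracketPow (p ^ e') (rootIdeal p e' (f ^ (p ^ e' - 1)))} e

section Pi

variable {p : ℕ} [Fact p.Prime] {k : Type*} [Field k] [CharP k p] [PerfectField k]
variable {D : Type*} [DecidableEq D]

/-- pointwise division of a finsupp exponent by `q` -/
noncomputable def divq (q : ℕ) (μ : D →₀ ℕ) : D →₀ ℕ := μ.mapRange (· / q) (Nat.zero_div q)

@[simp] lemma divq_apply (q : ℕ) (μ : D →₀ ℕ) (i : D) : divq q μ i = μ i / q :=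
  Finsupp.mapRange_apply

noncomputable def rtq (p : ℕ) (k : Type*) [CommSemiring k] [ExpChar k p] [PerfectRing k p]
    (e : ℕ) : k ≃+* k := (iterateFrobeniusEquiv k p e).symm

lemma rtq_pow (e : ℕ) (x : k) : rtq p k e (x ^ p ^ e) = x := by
  have : x ^ p ^ e = iterateFrobeniusEquiv k p e x := (iterateFrobeniusEquiv_def k p e x).symm
  rw [this, rtq, RingEquiv.symm_apply_apply]

open Classical in
noncomputable def piTerm (p : ℕ) [Fact p.Prime] (k : Type*) [Field k] [CharP k p]
    [PerfectField k] {D : Type*} [DecidableEq D] (e : ℕ) (c₀ : D →₀ ℕ) (μ : D →₀ ℕ) (s : k) :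
    MvPolynomial D k :=
  if ∀ i, μ i % p ^ e = c₀ i then monomial (divq (p ^ e) μ) (rtq p k e s) else 0

lemma piTerm_zero (e : ℕ) (c₀ μ : D →₀ ℕ) : piTerm p k e c₀ μ (0 : k) = 0 := by
  unfold piTerm
  split <;> simp

lemma piTerm_add (e : ℕ) (c₀ μ : D →₀ ℕ) (s t : k) :
    piTerm p k e c₀ μ (s + t) = piTerm p k e c₀ μ s + piTerm p k e c₀ μ t := by
  unfold piTerm
  split <;> simp [map_add]

noncomputable def piOp (p : ℕ) [Fact p.Prime] (k : Type*) [Field k] [CharP k p]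
    [PerfectField k] {D : Type*} [DecidableEq D] (e : ℕ) (c₀ : D →₀ ℕ) (r : MvPolynomial D k) :
    MvPolynomial D k :=
  ∑ μ ∈ r.support, piTerm p k e c₀ μ (coeff μ r)

lemma piOp_eq_sum_subset (e : ℕ) (c₀ : D →₀ ℕ) (r : MvPolynomial D k) (S : Finset (D →₀ ℕ))
    (hS : r.support ⊆ S) : piOp p k e c₀ r = ∑ μ ∈ S, piTerm p k e c₀ μ (coeff μ r) := by
  refine Finset.sum_subset hS fun μ _ hμ => ?_
  rw [MvPolynomial.notMem_support_iff.mp hμ, piTerm_zero]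

lemma piOp_zero (e : ℕ) (c₀ : D →₀ ℕ) : piOp p k e c₀ (0 : MvPolynomial D k) = 0 := by
  simp [piOp]

lemma piOp_add (e : ℕ) (c₀ : D →₀ ℕ) (r s : MvPolynomial D k) :
    piOp p k e c₀ (r + s) = piOp p k e c₀ r + piOp p k e c₀ s := by
  rw [piOp_eq_sum_subset e c₀ (r + s) (r.support ∪ s.support)
      (fun _ h => MvPolynomial.support_add h),
    piOp_eq_sum_subset e c₀ r (r.support ∪ s.support) Finset.subset_union_left,
    piOp_eq_sum_subset e c₀ s (r.support ∪ s.support) Finset.subset_union_right,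
    ← Finset.sum_add_distrib]
  refine Finset.sum_congr rfl fun μ _ => ?_
  rw [MvPolynomial.coeff_add, piTerm_add]

lemma piOp_monomial (e : ℕ) (c₀ μ : D →₀ ℕ) (s : k) :
    piOp p k e c₀ (monomial μ s) = piTerm p k e c₀ μ s := by
  classical
  rcases eq_or_ne s 0 with rfl | hs
  · simp [piOp, piTerm_zero]
  · rw [piOp, MvPolynomial.support_monomial, if_neg hs, Finset.sum_singleton,
      MvPolynomial.coeff_monomial, if_pos rfl]

end Pi

section Key

variable {p : ℕ} [Fact p.Prime] {k : Type*} [Field k] [CharP k p] [PerfectField k]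
variable {D : Type*} [DecidableEq D]

lemma piOp_monomial_pow_mul (e : ℕ) (c₀ : D →₀ ℕ) (μ : D →₀ ℕ) (s : k)
    (w : MvPolynomial D k) :
    piOp p k e c₀ (monomial (p ^ e • μ) (s ^ p ^ e) * w) = monomial μ s * piOp p k e c₀ w := by
  classical
  induction w using MvPolynomial.induction_on' with
  | monomial τ b =>
    rw [piOp_monomial, MvPolynomial.monomial_mul, piOp_monomial]
    unfold piTerm
    have hq : 0 < p ^ e := pow_pos (Fact.out (p := p.Prime)).pos e
    have hpred : (∀ i, (p ^ e • μ + τ) i % p ^ e = c₀ i) ↔ (∀ i, τ i % p ^ e = c₀ i) := by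
      apply forall_congr'
      intro i
      rw [Finsupp.add_apply, Finsupp.smul_apply, smul_eq_mul, Nat.mul_add_mod]
    by_cases hc : ∀ i, τ i % p ^ e = c₀ i
    · rw [if_pos (hpred.mpr hc), if_pos hc]
      have hdiv : divq (p ^ e) (p ^ e • μ + τ) = μ + divq (p ^ e) τ := by
        ext i
        rw [divq_apply, Finsupp.add_apply, Finsupp.add_apply, Finsupp.smul_apply,
          smul_eq_mul, divq_apply, Nat.mul_add_div hq]
      rw [hdiv, map_mul, rtq_pow, MvPolynomial.monomial_mul]
    · rw [if_neg (fun h => hc (hpred.mp h)), if_neg hc, mul_zero]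
  | add u v hu hv =>
    rw [mul_add, piOp_add, hu, hv, piOp_add, mul_add]

lemma piOp_pow_mul (e : ℕ) (c₀ : D →₀ ℕ) (u w : MvPolynomial D k) :
    piOp p k e c₀ (u ^ p ^ e * w) = u * piOp p k e c₀ w := by
  induction u using MvPolynomial.induction_on' with
  | monomial μ s =>
    rw [MvPolynomial.monomial_pow, piOp_monomial_pow_mul]
  | add u v hu hv =>
    rw [add_pow_char_pow, add_mul, piOp_add, hu, hv, add_mul]

lemma piOp_mem_of_mem_bracketPow (e : ℕ) (c₀ : D →₀ ℕ) {J : Ideal (MvPolynomial D k)}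
    {x : MvPolynomial D k} (hx : x ∈ bracketPow (p ^ e) J) :
    ∀ u, piOp p k e c₀ (u * x) ∈ J := by
  refine Submodule.span_induction ?_ ?_ ?_ ?_ hx
  · rintro _ ⟨h, hh, rfl⟩
    intro u
    rw [mul_comm, piOp_pow_mul]
    exact J.mul_mem_right _ hh
  · intro u
    rw [mul_zero, piOp_zero]
    exact J.zero_mem
  · intro x y _ _ hx hy u
    rw [mul_add, piOp_add]
    exact J.add_mem (hx u) (hy u)
  · intro r x _ hx u
    rw [smul_eq_mul, ← mul_assoc]
    exact hx (u * r)

lemma rootIdeal_monomial (e : ℕ) (c : D →₀ ℕ) :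
    rootIdeal p e ((monomial c 1 : MvPolynomial D k)) =
      Ideal.span {monomial (divq (p ^ e) c) 1} := by
  classical
  set q := p ^ e with hqdef
  have hq : 0 < q := pow_pos (Fact.out (p := p.Prime)).pos e
  set c₀ : D →₀ ℕ := c.mapRange (· % q) (Nat.zero_mod q) with hc₀
  have hpred : ∀ i, c i % q = c₀ i := fun i => by rw [hc₀, Finsupp.mapRange_apply]
  have hpim : piOp p k e c₀ ((monomial c 1 : MvPolynomial D k)) =
      monomial (divq q c) 1 := by
    rw [piOp_monomial]
    unfold piTerm
    rw [if_pos hpred, map_one]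
  apply le_antisymm
  · -- sInf ≤ span
    apply sInf_le
    show (monomial c 1 : MvPolynomial D k) ∈ bracketPow q (Ideal.span {monomial (divq q c) 1})
    have hsum : q • divq q c + c₀ = c := by
      ext i
      rw [Finsupp.add_apply, Finsupp.smul_apply, divq_apply, smul_eq_mul, hc₀,
        Finsupp.mapRange_apply, Nat.div_add_mod]
    have : (monomial c 1 : MvPolynomial D k) =
        (monomial (divq q c) 1) ^ q * monomial (c₀) 1 := by
      rw [MvPolynomial.monomial_pow, MvPolynomial.monomial_mul, one_pow, one_mul, hsum]
    rw [this]
    exact Ideal.mul_mem_right _ _ (Ideal.subset_span ⟨monomial (divq q c) 1,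
      Ideal.subset_span rfl, rfl⟩)
  · -- span ≤ every J
    apply le_sInf
    intro J hJ
    rw [Ideal.span_le, Set.singleton_subset_iff]
    have := piOp_mem_of_mem_bracketPow e c₀ hJ 1
    rwa [one_mul, hpim] at this

end Key

section Transport

variable {R : Type*} [CommRing R]

lemma coe_ideal_map_equiv (σ : R ≃+* R) (J : Ideal R) :
    ((J.map (σ : R →+* R) : Ideal R) : Set R) = σ '' (J : Set R) := by
  ext x
  rw [SetLike.mem_coe]
  constructor
  · intro h
    obtain ⟨y, hy, rfl⟩ := (Ideal.mem_map_of_equiv σ x).mp h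
    exact ⟨y, hy, rfl⟩
  · rintro ⟨y, hy, rfl⟩
    exact Ideal.mem_map_of_mem _ hy

lemma bracketPow_map (q : ℕ) (σ : R ≃+* R) (J : Ideal R) :
    bracketPow q (J.map (σ : R →+* R)) = (bracketPow q J).map (σ : R →+* R) := by
  unfold bracketPow
  rw [Ideal.map_span, coe_ideal_map_equiv]
  congr 1
  ext x
  constructor
  · rintro ⟨y, ⟨z, hz, rfl⟩, rfl⟩
    exact ⟨z ^ q, ⟨z, hz, rfl⟩, show (σ : R →+* R) (z ^ q) = σ z ^ q from map_pow σ z q⟩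
  · rintro ⟨y, ⟨z, hz, rfl⟩, rfl⟩
    exact ⟨σ z, ⟨z, hz, rfl⟩,
      show σ z ^ q = (σ : R →+* R) (z ^ q) from (map_pow σ z q).symm⟩

lemma rootIdeal_map (p e : ℕ) (σ : R ≃+* R) (g : R) :
    rootIdeal p e (σ g) = (rootIdeal p e g).map (σ : R →+* R) := by
  unfold rootIdeal
  have hset : {J : Ideal R | σ g ∈ bracketPow (p ^ e) J} =
      (fun J => J.map (σ : R →+* R)) '' {J : Ideal R | g ∈ bracketPow (p ^ e) J} := by
    ext J
    constructor
    · intro hJ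
      refine ⟨J.map (σ.symm : R →+* R), ?_, ?_⟩
      · show g ∈ bracketPow (p ^ e) (Ideal.map _ J)
        rw [bracketPow_map]
        have : g = σ.symm (σ g) := (σ.symm_apply_apply g).symm
        rw [this]
        exact Ideal.mem_map_of_mem _ hJ
      · show Ideal.map (σ : R →+* R) (Ideal.map (σ.symm : R →+* R) J) = J
        have h2 := Ideal.map_of_equiv (I := J) σ.symm
        rwa [RingEquiv.symm_symm] at h2
    · rintro ⟨I, hI, rfl⟩
      show σ g ∈ bracketPow (p ^ e) (Ideal.map _ I)
      rw [bracketPow_map]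
      exact Ideal.mem_map_of_mem _ hI
  rw [hset]
  refine (Ideal.map_sInf (EquivLike.surjective σ) ?_).symm
  intro J _
  rw [(RingHom.injective_iff_ker_eq_bot _).mp (EquivLike.injective σ)]
  exact bot_le

lemma ideal_span_singleton_map (σ : R ≃+* R) (g : R) :
    (Ideal.span {g}).map (σ : R →+* R) = Ideal.span {σ g} := by
  rw [Ideal.map_span, Set.image_singleton]
  rfl

lemma bracketPow_span_singleton (q : ℕ) (g : R) :
    bracketPow q (Ideal.span {g}) = Ideal.span {g ^ q} := by
  apply le_antisymm
  · unfold bracketPow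
    rw [Ideal.span_le]
    rintro _ ⟨x, hx, rfl⟩
    obtain ⟨r, rfl⟩ := Ideal.mem_span_singleton'.mp hx
    have : (fun a => a ^ q) (r * g) ∈ Ideal.span {g ^ q} := by
      rw [Ideal.mem_span_singleton]
      exact ⟨r ^ q, by show (r * g) ^ q = g ^ q * r ^ q; rw [mul_pow, mul_comm]⟩
    exact this
  · rw [Ideal.span_le, Set.singleton_subset_iff]
    exact Ideal.subset_span ⟨g, Ideal.subset_span rfl, rfl⟩

end Transport

section LinAlg

variable {k : Type*} [Field k] {d n : ℕ}

lemma exists_single_of_degree_one {D : Type*} (μ : D →₀ ℕ) (h : Finsupp.degree μ = 1) :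
    ∃ t, μ = Finsupp.single t 1 := by
  classical
  have hne : μ ≠ 0 := by
    intro h0
    rw [h0, map_zero] at h
    exact one_ne_zero h.symm
  have hcard : μ.support.card ≤ Finsupp.degree μ := by
    unfold Finsupp.degree
    calc μ.support.card = ∑ _i ∈ μ.support, 1 := by rw [Finset.sum_const, smul_eq_mul, mul_one]
    _ ≤ ∑ i ∈ μ.support, μ i :=
      Finset.sum_le_sum fun i hi => Nat.one_le_iff_ne_zero.mpr (Finsupp.mem_support_iff.mp hi)
  have hc1 : μ.support.card = 1 := by
    have h0 : μ.support.card ≠ 0 := by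
      rw [Finset.card_ne_zero, Finsupp.support_nonempty_iff]
      exact hne
    omega
  obtain ⟨t, b, hb, hμeq⟩ := Finsupp.card_support_eq_one'.mp hc1
  refine ⟨t, ?_⟩
  have hd : Finsupp.degree (Finsupp.single t b) = b := by
    exact Finsupp.degree_single t b
  rw [hμeq, hd] at h
  rw [hμeq, h]

lemma homog_one_rep (g : MvPolynomial (Fin d) k) (hg : g.IsHomogeneous 1) :
    g = ∑ t, C (coeff (Finsupp.single t 1) g) * X t := by
  classical
  apply MvPolynomial.ext
  intro μ
  rw [MvPolynomial.coeff_sum]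
  by_cases hμ : ∃ t, μ = Finsupp.single t 1
  · obtain ⟨t₀, rfl⟩ := hμ
    rw [Finset.sum_eq_single t₀]
    · rw [MvPolynomial.coeff_C_mul, MvPolynomial.coeff_X', if_pos rfl, mul_one]
    · intro t _ ht
      rw [MvPolynomial.coeff_C_mul, MvPolynomial.coeff_X', if_neg, mul_zero]
      intro hc
      exact ht (Finsupp.single_left_injective one_ne_zero hc)
    · intro h; exact absurd (Finset.mem_univ t₀) h
  · have h0 : coeff μ g = 0 := by
      by_contra hc
      have := hg hc
      replace this : Finsupp.degree μ = 1 := by rw [Finsupp.degree_eq_weight_one]; exact this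
      obtain ⟨t, ht⟩ := exists_single_of_degree_one μ this
      exact hμ ⟨t, ht⟩
    rw [h0]
    symm
    apply Finset.sum_eq_zero
    intro t _
    rw [MvPolynomial.coeff_C_mul, MvPolynomial.coeff_X', if_neg, mul_zero]
    intro hc
    exact hμ ⟨t, hc.symm⟩

lemma exists_psi (hnd : n ≤ d) (c : Fin n → (Fin d → k)) (hc : LinearIndependent k c) :
    ∃ ψ : (Fin d → k) ≃ₗ[k] (Fin d → k),
      ∀ i : Fin n, ψ (Pi.single (Fin.castLE hnd i) 1) = c i := by
  classical
  set W := Submodule.span k (Set.range c) with hW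
  let bW : Module.Basis (Fin n) k W := Module.Basis.span hc
  obtain ⟨Q, hQ⟩ := Submodule.exists_isCompl W
  set m := Module.finrank k Q with hm
  let bQ : Module.Basis (Fin m) k Q := Module.finBasis k Q
  let b0 : Module.Basis (Fin n ⊕ Fin m) k (Fin d → k) :=
    (bW.prod bQ).map (Submodule.prodEquivOfIsCompl W Q hQ)
  have hb0 : ∀ i, b0 (Sum.inl i) = c i := by
    intro i
    have h1 : (bW.prod bQ) (Sum.inl i) = (bW i, 0) :=
      Prod.ext (Module.Basis.prod_apply_inl_fst _ _ _) (Module.Basis.prod_apply_inl_snd _ _ _)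
    show (Submodule.prodEquivOfIsCompl W Q hQ) ((bW.prod bQ) (Sum.inl i)) = c i
    rw [h1, Submodule.coe_prodEquivOfIsCompl']
    simp only [ZeroMemClass.coe_zero, add_zero]
    exact congrArg Subtype.val (Module.Basis.span_apply hc i)
  have hnm : n + m = d := by
    have h1 := Submodule.finrank_add_eq_of_isCompl hQ
    have h2 : Module.finrank k W = n := by
      rw [Module.finrank_eq_card_basis bW, Fintype.card_fin]
    have h3 : Module.finrank k (Fin d → k) = d := Module.finrank_fin_fun k
    rw [h2, h3] at h1
    omega
  let eidx : (Fin n ⊕ Fin m) ≃ Fin d := finSumFinEquiv.trans (finCongr hnm)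
  let b : Module.Basis (Fin d) k (Fin d → k) := b0.reindex eidx
  have hb : ∀ i : Fin n, b (Fin.castLE hnd i) = c i := by
    intro i
    have he : eidx (Sum.inl i) = Fin.castLE hnd i := by
      apply Fin.ext
      simp [eidx, finSumFinEquiv, Fin.castLE]
    rw [← he]
    show b0.reindex eidx (eidx (Sum.inl i)) = c i
    rw [Module.Basis.reindex_apply, Equiv.symm_apply_apply, hb0]
  refine ⟨(Pi.basisFun k (Fin d)).equiv b (Equiv.refl _), fun i => ?_⟩
  have : (Pi.single (Fin.castLE hnd i) 1 : Fin d → k) =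
      Pi.basisFun k (Fin d) (Fin.castLE hnd i) := (Pi.basisFun_apply _ _ _).symm
  rw [this, Module.Basis.equiv_apply, Equiv.refl_apply, hb]

lemma li_coeffvec (ℓ : Fin n → MvPolynomial (Fin d) k)
    (hℓ : ∀ i, (ℓ i).IsHomogeneous 1) (hind : LinearIndependent k ℓ) :
    LinearIndependent k (fun i => (fun t => coeff (Finsupp.single t 1) (ℓ i)) :
      Fin n → (Fin d → k)) := by
  rw [Fintype.linearIndependent_iff]
  intro g hg
  have hg' : ∀ t, ∑ i, g i * coeff (Finsupp.single t 1) (ℓ i) = 0 := by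
    intro t
    have := congrFun hg t
    simpa using this
  have hsum : ∑ i, g i • ℓ i = 0 := by
    have : ∀ i, g i • ℓ i = ∑ t, C (g i * coeff (Finsupp.single t 1) (ℓ i)) * X t := by
      intro i
      rw [MvPolynomial.smul_eq_C_mul]
      conv_lhs => rw [homog_one_rep (ℓ i) (hℓ i)]
      rw [Finset.mul_sum]
      refine Finset.sum_congr rfl fun t _ => ?_
      rw [← mul_assoc, ← MvPolynomial.C_mul]
    rw [Finset.sum_congr rfl fun i _ => this i, Finset.sum_comm]
    apply Finset.sum_eq_zero
    intro t _
    rw [← Finset.sum_mul, ← map_sum, hg' t, MvPolynomial.C_0, zero_mul]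
  exact Fintype.linearIndependent_iff.mp hind g hsum

end LinAlg

section Subst

variable {k : Type*} [Field k] {d n : ℕ}

noncomputable def substHom (M : Fin d → Fin d → k) :
    MvPolynomial (Fin d) k →ₐ[k] MvPolynomial (Fin d) k :=
  aeval (fun j => ∑ t, C (M j t) * X t)

lemma substHom_X (M : Fin d → Fin d → k) (j : Fin d) :
    substHom M (X j) = ∑ t, C (M j t) * X t := by
  unfold substHom
  rw [aeval_X]

lemma substHom_linear (M : Fin d → Fin d → k) (v : Fin d → k) :
    substHom M (∑ t, C (v t) * X t) = ∑ s, C (∑ t, v t * M t s) * X s := by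
  rw [map_sum]
  have : ∀ t, substHom M (C (v t) * X t) = ∑ s, C (v t * M t s) * X s := by
    intro t
    rw [map_mul, substHom_X]
    have hC : substHom M (C (v t)) = C (v t) := by
      unfold substHom
      rw [aeval_C]
      rfl
    rw [hC, Finset.mul_sum]
    refine Finset.sum_congr rfl fun s _ => ?_
    rw [← mul_assoc, ← MvPolynomial.C_mul]
  rw [Finset.sum_congr rfl fun t _ => this t, Finset.sum_comm]
  refine Finset.sum_congr rfl fun s _ => ?_
  rw [← Finset.sum_mul, ← map_sum]

lemma sum_single_eq_self (v : Fin d → k) : ∑ t, v t • (Pi.single t 1 : Fin d → k) = v := by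
  have : ∀ t, v t • (Pi.single t 1 : Fin d → k) = Pi.single t (v t) := by
    intro t
    rw [← Pi.single_smul, smul_eq_mul, mul_one]
  rw [Finset.sum_congr rfl fun t _ => this t]
  exact Finset.univ_sum_single v

lemma substHom_psi_comp (ψ : (Fin d → k) ≃ₗ[k] (Fin d → k)) :
    (substHom (fun j => ψ.symm (Pi.single j 1))).comp
      (substHom (fun j => ψ (Pi.single j 1))) = AlgHom.id k _ := by
  apply MvPolynomial.algHom_ext
  intro j
  rw [AlgHom.comp_apply, substHom_X, substHom_linear, AlgHom.id_apply]
  have hcoef : ∀ s, (∑ t, ψ (Pi.single j 1) t * ψ.symm (Pi.single t 1) s) =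
      (Pi.single j 1 : Fin d → k) s := by
    intro s
    have e1 : ∑ t, ψ (Pi.single j 1) t * ψ.symm (Pi.single t 1) s =
        (ψ.symm (∑ t, ψ (Pi.single j 1) t • (Pi.single t 1 : Fin d → k))) s := by
      rw [map_sum, Finset.sum_apply]
      refine Finset.sum_congr rfl fun t _ => ?_
      rw [map_smul, Pi.smul_apply, smul_eq_mul]
    rw [e1, sum_single_eq_self, ψ.symm_apply_apply]
  rw [Finset.sum_congr rfl fun s _ => by rw [hcoef s]]
  rw [Finset.sum_eq_single j]
  · rw [Pi.single_eq_same, MvPolynomial.C_1, one_mul]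
  · intro s _ hs
    rw [Pi.single_eq_of_ne hs, MvPolynomial.C_0, zero_mul]
  · intro h; exact absurd (Finset.mem_univ j) h

lemma exists_algequiv (hnd : n ≤ d) (ℓ : Fin n → MvPolynomial (Fin d) k)
    (hℓ : ∀ i, (ℓ i).IsHomogeneous 1) (hind : LinearIndependent k ℓ) :
    ∃ σ : MvPolynomial (Fin d) k ≃ₐ[k] MvPolynomial (Fin d) k,
      ∀ i, σ (X (Fin.castLE hnd i)) = ℓ i := by
  classical
  set cvec : Fin n → (Fin d → k) := fun i t => coeff (Finsupp.single t 1) (ℓ i) with hcvec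
  obtain ⟨ψ, hψ⟩ := exists_psi hnd cvec (li_coeffvec ℓ hℓ hind)
  have h1 := substHom_psi_comp ψ
  have h2 := substHom_psi_comp ψ.symm
  rw [ψ.symm_symm] at h2
  refine ⟨AlgEquiv.ofAlgHom (substHom (fun j => ψ (Pi.single j 1)))
    (substHom (fun j => ψ.symm (Pi.single j 1))) h2 h1, fun i => ?_⟩
  show substHom (fun j => ψ (Pi.single j 1)) (X (Fin.castLE hnd i)) = ℓ i
  rw [substHom_X, hψ i]
  exact (homog_one_rep (ℓ i) (hℓ i)).symm

end Subst

section NatLemmas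

lemma natL1 {q m : ℕ} (hq : 0 < q) (hm : m ≤ q) : (q - 1) * m / q = m - 1 := by
  rcases Nat.eq_zero_or_pos m with rfl | hm1
  · simp
  obtain ⟨m', rfl⟩ : ∃ m', m = m' + 1 := ⟨m - 1, by omega⟩
  obtain ⟨q', rfl⟩ : ∃ q', q = q' + 1 := ⟨q - 1, by omega⟩
  have hm' : m' ≤ q' := by omega
  have e1 : (q' + 1 - 1) * (m' + 1) = q' * m' + q' := by
    rw [Nat.add_sub_cancel]; ring
  have e2 : (q' + 1) * (m' + 1 - 1) + ((q' + 1) - (m' + 1)) = q' * m' + m' + (q' - m') := by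
    rw [Nat.add_sub_cancel, Nat.succ_sub_succ]; ring_nf
  have e3 : q' * m' + q' = (q' + 1) * (m' + 1 - 1) + ((q' + 1) - (m' + 1)) := by
    rw [e2]; omega
  rw [e1, e3, Nat.mul_add_div hq, Nat.div_eq_of_lt (by omega), add_zero, Nat.add_sub_cancel]

lemma natL2 {p q m : ℕ} (hpq : p ≤ q) (h : p * m ≤ q) : q * (m - 1) ≤ (q - p) * m := by
  rcases Nat.eq_zero_or_pos m with rfl | hm1
  · simp
  obtain ⟨m', rfl⟩ : ∃ m', m = m' + 1 := ⟨m - 1, by omega⟩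
  have hqp : (q - p) + p = q := by omega
  have e1 : q * m' = (q - p) * m' + p * m' := by
    calc q * m' = ((q - p) + p) * m' := by rw [hqp]
    _ = (q - p) * m' + p * m' := Nat.add_mul _ _ _
  have e2 : (q - p) * (m' + 1) = (q - p) * m' + (q - p) := by ring
  have e3 : p * (m' + 1) = p * m' + p := by ring
  have e4 : q * (m' + 1 - 1) = q * m' := by rw [Nat.add_sub_cancel]
  omega

lemma natL3 {p q s : ℕ} (hp : 2 ≤ p) (hq : p ≤ q) (hs : 1 ≤ s) (h : q < p * s) :
    (q - p) * s < q * ((q - 1) * s / q) := by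
  have hq0 : 0 < q := by omega
  set w := (q - 1) * s / q with hw
  have hdm : q * w + (q - 1) * s % q = (q - 1) * s := Nat.div_add_mod _ q
  set r := (q - 1) * s % q with hr
  have hA : (q - 1) * s = (q - p) * s + (p - 1) * s := by
    rw [← Nat.add_mul]
    congr 1
    omega
  have hsuff : r < (p - 1) * s → (q - p) * s < q * w := by
    intro hlt
    omega
  apply hsuff
  have hp1s : s ≤ (p - 1) * s := Nat.le_mul_of_pos_left s (by omega)
  have hps : p * s = (p - 1) * s + s := by
    have h1 : p - 1 + 1 = p := by omega
    calc p * s = ((p - 1) + 1) * s := by rw [h1]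
    _ = (p - 1) * s + 1 * s := Nat.add_mul _ _ _
    _ = (p - 1) * s + s := by rw [one_mul]
  obtain ⟨u, v, hs', huq⟩ : ∃ u v, s = q * v + u ∧ u < q :=
    ⟨s % q, s / q, by have := Nat.div_add_mod s q; omega, Nat.mod_lt _ hq0⟩
  have hru : r = (q - 1) * u % q := by
    have e : (q - 1) * s = (q - 1) * u + ((q - 1) * v) * q := by
      rw [hs']; ring
    rw [hr, e, Nat.add_mul_mod_self_right]
  rcases Nat.eq_zero_or_pos u with hu0 | hu1
  · rw [hru, hu0, mul_zero, Nat.zero_mod]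
    have : 0 < (p - 1) * s := Nat.mul_pos (by omega) hs
    omega
  · have hqu : (q - 1) * u = (u - 1) * q + (q - u) := by
      obtain ⟨u', rfl⟩ : ∃ u', u = u' + 1 := ⟨u - 1, by omega⟩
      obtain ⟨q', rfl⟩ : ∃ q', q = q' + 1 := ⟨q - 1, by omega⟩
      have e1 : (q' + 1 - 1) * (u' + 1) = q' * u' + q' := by
        rw [Nat.add_sub_cancel]; ring
      have e2 : (u' + 1 - 1) * (q' + 1) + ((q' + 1) - (u' + 1)) = u' * q' + u' + (q' - u') := by
        rw [Nat.add_sub_cancel, Nat.succ_sub_succ]; ring_nf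
      rw [e1, e2, Nat.mul_comm u' q']
      omega
    have hrqu : r = q - u := by
      rw [hru, hqu, add_comm, Nat.add_mul_mod_self_right, Nat.mod_eq_of_lt (by omega)]
    rcases Nat.eq_zero_or_pos v with hv0 | hv1
    · rw [hv0, mul_zero, zero_add] at hs'
      omega
    · have hqv : q ≤ q * v := Nat.le_mul_of_pos_right q hv1
      omega

end NatLemmas

lemma monomial_prod {k : Type*} [CommSemiring k] {D ι : Type*} (s : Finset ι)
    (μ : ι → (D →₀ ℕ)) :
    ∏ i ∈ s, (monomial (μ i) (1 : k)) = monomial (∑ i ∈ s, μ i) 1 := by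
  classical
  induction s using Finset.induction_on with
  | empty => simp
  | insert _ _ hi ih =>
    rw [Finset.prod_insert hi, Finset.sum_insert hi, ih, MvPolynomial.monomial_mul, one_mul]

/-- For `f = ℓ₁^{a₁}⋯ℓ_n^{a_n}` a product of powers of linearly independent linear forms in
`k[x₁,…,x_d]` (`n ≤ d`, all `aᵢ > 0`) and `a = max aᵢ`, the level of `f` is
`e = ⌈log_p a⌉ + 1` and `I_e(f^(p^e - 1)) = (ℓ₁^{a₁-1}⋯ℓ_n^{a_n-1})`. -/
theorem stmt_9 (p : ℕ) [Fact p.Prime] (k : Type*) [Field k] [CharP k p] [PerfectField k]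
    (d n : ℕ) (hnd : n ≤ d)
    (ℓ : Fin n → MvPolynomial (Fin d) k)
    (hℓ : ∀ i, (ℓ i).IsHomogeneous 1)
    (hind : LinearIndependent k ℓ)
    (a : Fin n → ℕ) (ha : ∀ i, 0 < a i)
    (e : ℕ) (he : e = Nat.clog p (Finset.univ.sup a) + 1)
    (f : MvPolynomial (Fin d) k)
    (hf : f = ∏ i, ℓ i ^ a i) :
    HasLevel p f e ∧
    rootIdeal p e (f ^ (p ^ e - 1)) = Ideal.span {∏ i, ℓ i ^ (a i - 1)} := by
  classical
  have hp1 : 1 < p := (Fact.out (p := p.Prime)).one_lt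
  obtain ⟨σ, hσ⟩ := exists_algequiv hnd ℓ hℓ hind
  set σr : MvPolynomial (Fin d) k ≃+* MvPolynomial (Fin d) k := σ.toRingEquiv with hσr
  have hco : ∀ x, σr x = σ x := fun _ => rfl
  set A : (Fin n → ℕ) → (Fin d →₀ ℕ) :=
    (fun b => ∑ i, Finsupp.single (Fin.castLE hnd i) (b i)) with hA
  have hAapp : ∀ (b : Fin n → ℕ) (i : Fin n), A b (Fin.castLE hnd i) = b i := by
    intro b i
    rw [hA]
    rw [Finsupp.finset_sum_apply, Finset.sum_eq_single i]
    · rw [Finsupp.single_eq_same]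
    · intro j _ hj
      exact Finsupp.single_eq_of_ne' fun hc => hj (Fin.castLE_injective hnd hc)
    · intro h; exact absurd (Finset.mem_univ i) h
  have hAout : ∀ (b : Fin n → ℕ) (j : Fin d), (¬ ∃ i, Fin.castLE hnd i = j) → A b j = 0 := by
    intro b j hj
    rw [hA, Finsupp.finset_sum_apply]
    apply Finset.sum_eq_zero
    intro i _
    exact Finsupp.single_eq_of_ne' fun hc => hj ⟨i, hc⟩
  have hAle : ∀ (b c : Fin n → ℕ), A b ≤ A c ↔ ∀ i, b i ≤ c i := by
    intro b c
    rw [Finsupp.le_def]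
    constructor
    · intro h i
      have := h (Fin.castLE hnd i)
      rwa [hAapp, hAapp] at this
    · intro h j
      by_cases hj : ∃ i, Fin.castLE hnd i = j
      · obtain ⟨i, rfl⟩ := hj
        rw [hAapp, hAapp]; exact h i
      · rw [hAout _ _ hj, hAout _ _ hj]
  have hsmulA : ∀ (m : ℕ) (b : Fin n → ℕ), m • A b = A (fun i => m * b i) := by
    intro m b
    rw [hA, Finset.smul_sum]
    refine Finset.sum_congr rfl fun i _ => ?_
    rw [Finsupp.smul_single, smul_eq_mul]
  have hmono : ∀ b : Fin n → ℕ, (monomial (A b) (1:k)) = ∏ i, X (Fin.castLE hnd i) ^ b i := by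
    intro b
    rw [Finset.prod_congr rfl fun (i : Fin n) _ => X_pow_eq_monomial, monomial_prod]
  have hσmono : ∀ b : Fin n → ℕ, σ (monomial (A b) 1) = ∏ i, ℓ i ^ b i := by
    intro b
    rw [hmono, map_prod]
    exact Finset.prod_congr rfl fun i _ => by rw [map_pow, hσ i]
  have hf' : f = σ (monomial (A a) 1) := by rw [hσmono, hf]
  have hpow : ∀ (m : ℕ), f ^ m = σ (monomial (A (fun i => m * a i)) 1) := by
    intro m
    rw [hf', ← map_pow, MvPolynomial.monomial_pow, one_pow, hsmulA]
  -- main computation for a general exponent E ≥ 1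
  have main : ∀ E : ℕ,
      (rootIdeal p E (f ^ (p ^ E - 1)) =
        Ideal.span {σ (monomial (A (fun i => (p ^ E - 1) * a i / p ^ E)) 1)}) ∧
      (f ^ (p ^ E - p) ∈ bracketPow (p ^ E) (rootIdeal p E (f ^ (p ^ E - 1))) ↔
        ∀ i, p ^ E * ((p ^ E - 1) * a i / p ^ E) ≤ (p ^ E - p) * a i) := by
    intro E
    set q' := p ^ E with hq'
    set c₁ : Fin n → ℕ := fun i => (q' - 1) * a i / q' with hc₁
    have hdivA : divq q' (A (fun i => (q' - 1) * a i)) = A c₁ := by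
      ext j
      rw [divq_apply]
      by_cases hj : ∃ i, Fin.castLE hnd i = j
      · obtain ⟨i, rfl⟩ := hj
        rw [hAapp, hAapp]
      · rw [hAout _ _ hj, hAout _ _ hj, Nat.zero_div]
    have part1 : rootIdeal p E (f ^ (q' - 1)) =
        Ideal.span {σ (monomial (A c₁) 1)} := by
      rw [hpow, ← hco, rootIdeal_map, rootIdeal_monomial, ← hq', hdivA,
        ideal_span_singleton_map, hco]
    refine ⟨part1, ?_⟩
    rw [part1]
    have hbr : bracketPow q' (Ideal.span {σ (monomial (A c₁) 1)}) =
        Ideal.span {σ (monomial (A (fun i => q' * c₁ i)) 1)} := by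
      rw [bracketPow_span_singleton, ← map_pow, MvPolynomial.monomial_pow, one_pow, hsmulA]
    rw [hbr, hpow]
    have hmm : ∀ x y : MvPolynomial (Fin d) k, σ x ∈ Ideal.span {σ y} ↔ x ∈ Ideal.span {y} := by
      intro x y
      rw [← hco, ← hco, ← ideal_span_singleton_map σr y]
      exact Ideal.apply_mem_of_equiv_iff
    rw [hmm, Ideal.mem_span_singleton, MvPolynomial.monomial_dvd_monomial]
    simp only [one_ne_zero, false_or, dvd_refl, and_true]
    exact hAle _ _
  have hsup_le : ∀ i, a i ≤ Finset.univ.sup a := fun i => Finset.le_sup (Finset.mem_univ i)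
  have hpa : ∀ i, p * a i ≤ p ^ e := by
    intro i
    calc p * a i ≤ p * p ^ Nat.clog p (Finset.univ.sup a) :=
      Nat.mul_le_mul_left p ((hsup_le i).trans (Nat.le_pow_clog hp1 _))
    _ = p ^ e := by rw [he, pow_succ, mul_comm]
  have he1 : 1 ≤ e := by rw [he]; omega
  have hple : p ≤ p ^ e := by
    calc p = p ^ 1 := (pow_one p).symm
    _ ≤ p ^ e := Nat.pow_le_pow_right (by omega) he1
  have haq : ∀ i, a i ≤ p ^ e := fun i =>
    le_trans (Nat.le_mul_of_pos_left (a i) (by omega)) (hpa i)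
  have hc₁e : (fun i => (p ^ e - 1) * a i / p ^ e) = fun i => a i - 1 := by
    funext i
    exact natL1 (pow_pos (by omega) e) (haq i)
  obtain ⟨part1e, part2e⟩ := main e
  constructor
  · constructor
    · -- e is in the set
      refine ⟨he1, ?_⟩
      apply part2e.mpr
      intro i
      rw [natL1 (pow_pos (by omega) e) (haq i)]
      exact natL2 hple (hpa i)
    · -- lower bound
      intro e' he'mem
      by_contra hlt
      push_neg at hlt
      obtain ⟨he'1, hmem⟩ := he'mem
      have hclog1 : 1 ≤ Nat.clog p (Finset.univ.sup a) := by omega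
      have hsup2 : 2 ≤ Finset.univ.sup a := by
        by_contra hc
        push_neg at hc
        rw [Nat.clog_of_right_le_one (by omega) p] at hclog1
        omega
      have hne : (Finset.univ : Finset (Fin n)).Nonempty := by
        by_contra hcon
        rw [Finset.not_nonempty_iff_eq_empty] at hcon
        rw [hcon, Finset.sup_empty, Nat.bot_eq_zero] at hsup2
        exact absurd hsup2 (by omega)
      obtain ⟨i₀, _, hi₀⟩ := Finset.exists_mem_eq_sup Finset.univ hne a
      have hq'lt : p ^ e' < p * a i₀ := by
        have h1 : p ^ (e' - 1) < Finset.univ.sup a :=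
          (Nat.lt_clog_iff_pow_lt hp1).mp (by omega)
        have h2 : p ^ e' = p * p ^ (e' - 1) := by
          conv_lhs => rw [show e' = e' - 1 + 1 by omega]
          rw [pow_succ']
        rw [h2, ← hi₀]
        exact mul_lt_mul_of_pos_left h1 (by omega)
      obtain ⟨_, part2'⟩ := main e'
      have hcontr := part2'.mp hmem i₀
      have hple' : p ≤ p ^ e' := by
        calc p = p ^ 1 := (pow_one p).symm
        _ ≤ p ^ e' := Nat.pow_le_pow_right (by omega) he'1
      exact absurd hcontr (not_le.mpr (natL3 (by omega) hple' (ha i₀) hq'lt))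
  · rw [part1e, hc₁e, hσmono]
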